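/- Let (f_n) be a sequence of holomorphic functions on a domain D ⊂ ℂ (open connected) which is uniformly bounded on every compact subset of D, and which converges pointwise to 0 on some nonempty open subset D' ⊂ D. Then (f_n) converges to 0 uniformly on every compact subset of D. -/

import Mathlib

open Filter Metric MeasureTheory Complex

lemma aux_coeff_tendsto (f : ℕ → ℂ → ℂ) (w : ℂ) (t M : ℝ) (ht : 0 < t)
    (hcont : ∀ n, ContinuousOn (f n) (sphere w t))
    (hMb : ∀ n, ∀ z ∈ sphere w t, ‖f n z‖ ≤ M)
    (hpt : ∀ z ∈ sphere w t, Tendsto (fun n => f n z) atTop (nhds 0)) :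
    ∀ k, Tendsto (fun n => ‖cauchyPowerSeries (f n) w t k‖) atTop (nhds 0) := by
  have hcm : ∀ n, Continuous fun θ : ℝ => f n (circleMap w t θ) := fun n =>
    (hcont n).comp_continuous (continuous_circleMap w t)
      (fun θ => circleMap_mem_sphere w ht.le θ)
  have hint : Tendsto (fun n => ∫ θ in (0:ℝ)..2 * Real.pi, ‖f n (circleMap w t θ)‖)
      atTop (nhds 0) := by
    have key := intervalIntegral.tendsto_integral_filter_of_dominated_convergence
      (μ := volume) (l := atTop)
      (F := fun n θ => ‖f n (circleMap w t θ)‖) (f := fun _ : ℝ => (0:ℝ))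
      (a := 0) (b := 2 * Real.pi) (bound := fun _ => M)
      (Eventually.of_forall fun n => ((hcm n).norm.aestronglyMeasurable))
      (Eventually.of_forall fun n => ae_of_all _ fun θ _ => by
        simpa using hMb n _ (circleMap_mem_sphere w ht.le θ))
      intervalIntegrable_const
      (ae_of_all _ fun θ _ => by
        simpa using (hpt _ (circleMap_mem_sphere w ht.le θ)).norm)
    simpa using key
  intro k
  apply squeeze_zero (fun n => norm_nonneg _)
    (fun n => norm_cauchyPowerSeries_le (f n) w t k)
  have := (hint.const_mul ((2 * Real.pi)⁻¹)).mul_const (|t|⁻¹ ^ k)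
  simpa using this


lemma aux_ball_conv (f : ℕ → ℂ → ℂ) (w : ℂ) (R r M : ℝ) (hr : 0 < r) (hrR : r < R)
    (hdiff : ∀ n, DifferentiableOn ℂ (f n) (closedBall w R))
    (hM : 0 ≤ M) (hMb : ∀ n, ∀ z ∈ sphere w R, ‖f n z‖ ≤ M)
    (hcoeff : ∀ k, Tendsto (fun n => ‖cauchyPowerSeries (f n) w R k‖) atTop (nhds 0)) :
    TendstoUniformlyOn f 0 atTop (closedBall w r) := by
  have hR : 0 < R := hr.trans hrR
  set Rn : NNReal := ⟨R, hR.le⟩ with hRn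
  have hps : ∀ n, HasFPowerSeriesOnBall (f n) (cauchyPowerSeries (f n) w R) w
      (Rn : ENNReal) := fun n =>
    DifferentiableOn.hasFPowerSeriesOnBall (R := Rn) (hdiff n) hR
  have hbound : ∀ n k, ‖cauchyPowerSeries (f n) w R k‖ ≤ M * R⁻¹ ^ k := by
    intro n k
    refine (norm_cauchyPowerSeries_le (f n) w R k).trans ?_
    have hcm : Continuous fun θ : ℝ => f n (circleMap w R θ) :=
      ((hdiff n).continuousOn.mono sphere_subset_closedBall).comp_continuous
        (continuous_circleMap w R) (fun θ => circleMap_mem_sphere w hR.le θ)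
    have hI : (∫ θ in (0:ℝ)..2 * Real.pi, ‖f n (circleMap w R θ)‖) ≤
        ∫ _θ in (0:ℝ)..2 * Real.pi, M := by
      apply intervalIntegral.integral_mono_on Real.two_pi_pos.le
        (hcm.norm.intervalIntegrable _ _) intervalIntegrable_const
      exact fun θ _ => hMb n _ (circleMap_mem_sphere w hR.le θ)
    have hIc : (∫ _θ in (0:ℝ)..2 * Real.pi, M) = 2 * Real.pi * M := by
      simp [mul_comm]
    rw [abs_of_pos hR]
    refine mul_le_mul_of_nonneg_right ?_ (by positivity)
    calc (2 * Real.pi)⁻¹ * ∫ θ in (0:ℝ)..2 * Real.pi, ‖f n (circleMap w R θ)‖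
        ≤ (2 * Real.pi)⁻¹ * (2 * Real.pi * M) := by
          refine mul_le_mul_of_nonneg_left ?_ (by positivity)
          rw [← hIc]; exact hI
      _ = M := by field_simp
  rw [Metric.tendstoUniformlyOn_iff]
  intro ε hε
  set q : ℝ := r / R with hqdef
  have hq0 : 0 ≤ q := by positivity
  have hq1 : q < 1 := (div_lt_one hR).2 hrR
  obtain ⟨N, hN⟩ : ∃ N, M * q ^ N * (1 - q)⁻¹ < ε / 2 := by
    have h2 : Tendsto (fun N : ℕ => M * q ^ N * (1 - q)⁻¹) atTop (nhds 0) := by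
      have := ((tendsto_pow_atTop_nhds_zero_of_lt_one hq0 hq1).const_mul M).mul_const (1 - q)⁻¹
      simpa using this
    exact (h2.eventually (gt_mem_nhds (half_pos hε))).exists
  have hhead : Tendsto (fun n => ∑ k ∈ Finset.range N,
      ‖cauchyPowerSeries (f n) w R k‖ * r ^ k) atTop (nhds 0) := by
    have h3 : Tendsto (fun n => ∑ k ∈ Finset.range N,
        ‖cauchyPowerSeries (f n) w R k‖ * r ^ k) atTop
        (nhds (∑ k ∈ Finset.range N, (0:ℝ) * r ^ k)) :=
      tendsto_finset_sum _ (fun k _ => (hcoeff k).mul_const _)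
    simpa using h3
  filter_upwards [hhead.eventually (gt_mem_nhds (half_pos hε))] with n hn z hz
  have hy : ‖z - w‖ ≤ r := by rwa [mem_closedBall, dist_eq_norm] at hz
  have hyR : z - w ∈ Metric.eball (0 : ℂ) (Rn : ENNReal) := by
    rw [EMetric.mem_ball, edist_zero_right]
    have h4 : ‖z - w‖ < R := lt_of_le_of_lt hy hrR
    exact_mod_cast h4
  have hsum : HasSum (fun k => cauchyPowerSeries (f n) w R k fun _ => z - w) (f n z) := by
    have := (hps n).hasSum hyR
    simpa using this
  set g : ℕ → ℂ := fun k => cauchyPowerSeries (f n) w R k fun _ => z - w with hgdef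
  have gnorm : ∀ k, ‖g k‖ ≤ ‖cauchyPowerSeries (f n) w R k‖ * r ^ k := by
    intro k
    refine (ContinuousMultilinearMap.le_opNorm _ _).trans ?_
    have h5 : (∏ _i : Fin k, ‖z - w‖) = ‖z - w‖ ^ k := by simp
    rw [h5]
    exact mul_le_mul_of_nonneg_left (pow_le_pow_left₀ (norm_nonneg _) hy k) (norm_nonneg _)
  have gM : ∀ k, ‖g k‖ ≤ M * q ^ k := by
    intro k
    refine (gnorm k).trans ?_
    refine (mul_le_mul_of_nonneg_right (hbound n k) (pow_nonneg hr.le k)).trans_eq ?_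
    rw [hqdef, div_pow, inv_pow]
    field_simp
  have hsq : Summable fun i => M * q ^ (i + N) := by
    have h1 : Summable fun i : ℕ => (M * q ^ N) * q ^ i :=
      (summable_geometric_of_lt_one hq0 hq1).mul_left _
    refine h1.congr fun i => ?_
    rw [pow_add]; ring
  have hgs : Summable fun i => ‖g (i + N)‖ :=
    Summable.of_nonneg_of_le (fun _ => norm_nonneg _) (fun i => gM (i + N)) hsq
  have htail : ‖∑' i, g (i + N)‖ ≤ M * q ^ N * (1 - q)⁻¹ := by
    refine (norm_tsum_le_tsum_norm hgs).trans ?_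
    refine (Summable.tsum_le_tsum (fun i => gM (i + N)) hgs hsq).trans_eq ?_
    have h6 : (fun i : ℕ => M * q ^ (i + N)) = fun i : ℕ => (M * q ^ N) * q ^ i := by
      funext i; rw [pow_add]; ring
    rw [h6, tsum_mul_left, tsum_geometric_of_lt_one hq0 hq1]
  have hdecomp : (∑ k ∈ Finset.range N, g k) + ∑' i, g (i + N) = f n z := by
    rw [Summable.sum_add_tsum_nat_add N hsum.summable, hsum.tsum_eq]
  have hfin : ‖f n z‖ < ε := by
    calc ‖f n z‖ = ‖(∑ k ∈ Finset.range N, g k) + ∑' i, g (i + N)‖ := by rw [hdecomp]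
      _ ≤ ‖∑ k ∈ Finset.range N, g k‖ + ‖∑' i, g (i + N)‖ := norm_add_le _ _
      _ ≤ (∑ k ∈ Finset.range N, ‖cauchyPowerSeries (f n) w R k‖ * r ^ k)
            + M * q ^ N * (1 - q)⁻¹ := by
          gcongr
          exact (norm_sum_le _ _).trans (Finset.sum_le_sum fun k _ => gnorm k)
      _ < ε / 2 + ε / 2 := add_lt_add hn hN
      _ = ε := by ring
  simpa [dist_eq_norm] using hfin

/-- A sequence of holomorphic functions on a domain `D`, locally uniformly bounded,
converging pointwise to `0` on a nonempty open subset `D' ⊆ D`, converges to `0`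
uniformly on every compact subset of `D`. -/
theorem holomorphic_bounded_tendsto_zero (D D' : Set ℂ)
    (hD : IsOpen D) (hDconn : IsConnected D)
    (hD' : IsOpen D') (hD'ne : D'.Nonempty) (hsub : D' ⊆ D)
    (f : ℕ → ℂ → ℂ) (hf : ∀ n, DifferentiableOn ℂ (f n) D)
    (hbdd : ∀ K ⊆ D, IsCompact K → ∃ M : ℝ, ∀ n : ℕ, ∀ z ∈ K, ‖f n z‖ ≤ M)
    (hconv : ∀ z ∈ D', Filter.Tendsto (fun n => f n z) Filter.atTop (nhds 0)) :
    ∀ K ⊆ D, IsCompact K → TendstoUniformlyOn f 0 Filter.atTop K := by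
  classical
  set C : Set ℂ := {z | z ∈ D ∧ ∃ r > 0, TendstoUniformlyOn f 0 atTop (closedBall z r)}
    with hCdef
  have absorb : ∀ a ∈ C, ∀ R, 0 < R → closedBall a R ⊆ D → ∀ r, 0 < r → r < R →
      TendstoUniformlyOn f 0 atTop (closedBall a r) := by
    rintro a ⟨haD, s, hs, hconvs⟩ R hR hRD r hr hrR
    set t : ℝ := min s R with htdef
    have ht : 0 < t := lt_min hs hR
    have htR : t ≤ R := min_le_right _ _
    have hts : t ≤ s := min_le_left _ _
    have htsub : closedBall a t ⊆ closedBall a R := closedBall_subset_closedBall htR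
    have hsphD : sphere a t ⊆ D := fun z hz => hRD (htsub (sphere_subset_closedBall hz))
    obtain ⟨M, hM⟩ := hbdd (closedBall a R) hRD (isCompact_closedBall _ _)
    have hM0 : 0 ≤ M := le_trans (norm_nonneg _) (hM 0 a (mem_closedBall_self hR.le))
    have hcoefft : ∀ k,
        Tendsto (fun n => ‖cauchyPowerSeries (f n) a t k‖) atTop (nhds 0) := by
      apply aux_coeff_tendsto f a t M ht
      · exact fun n => ((hf n).continuousOn.mono hsphD)
      · exact fun n z hz => hM n z (htsub (sphere_subset_closedBall hz))
      · intro z hz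
        exact hconvs.tendsto_at (closedBall_subset_closedBall hts (sphere_subset_closedBall hz))
    have hsame : ∀ n, cauchyPowerSeries (f n) a t = cauchyPowerSeries (f n) a R := by
      intro n
      set tn : NNReal := ⟨t, ht.le⟩ with htn
      set Rn : NNReal := ⟨R, hR.le⟩ with hRn2
      have h1 : HasFPowerSeriesOnBall (f n) (cauchyPowerSeries (f n) a t) a (tn : ENNReal) :=
        DifferentiableOn.hasFPowerSeriesOnBall (R := tn)
          ((hf n).mono (fun z hz => hRD (htsub hz))) ht
      have h2 : HasFPowerSeriesOnBall (f n) (cauchyPowerSeries (f n) a R) a (Rn : ENNReal) :=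
        DifferentiableOn.hasFPowerSeriesOnBall (R := Rn) ((hf n).mono hRD) hR
      exact h1.hasFPowerSeriesAt.eq_formalMultilinearSeries h2.hasFPowerSeriesAt
    have hcoeffR : ∀ k,
        Tendsto (fun n => ‖cauchyPowerSeries (f n) a R k‖) atTop (nhds 0) := by
      intro k
      have h7 := hcoefft k
      have h8 : (fun n => ‖cauchyPowerSeries (f n) a t k‖)
          = fun n => ‖cauchyPowerSeries (f n) a R k‖ := by
        funext n; rw [hsame n]
      rwa [h8] at h7
    exact aux_ball_conv f a R r M hr hrR (fun n => (hf n).mono hRD) hM0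
      (fun n z hz => hM n z (sphere_subset_closedBall hz)) hcoeffR
  have hCne : C.Nonempty := by
    obtain ⟨z0, hz0⟩ := hD'ne
    obtain ⟨δ, hδ, hδsub⟩ := nhds_basis_closedBall.mem_iff.1 (hD'.mem_nhds hz0)
    obtain ⟨M, hM⟩ := hbdd (closedBall z0 δ) (fun z hz => hsub (hδsub hz))
      (isCompact_closedBall _ _)
    have hcoeff : ∀ k,
        Tendsto (fun n => ‖cauchyPowerSeries (f n) z0 δ k‖) atTop (nhds 0) := by
      apply aux_coeff_tendsto f z0 δ M hδ
      · exact fun n => (hf n).continuousOn.mono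
          (fun z hz => hsub (hδsub (sphere_subset_closedBall hz)))
      · exact fun n z hz => hM n z (sphere_subset_closedBall hz)
      · exact fun z hz => hconv z (hδsub (sphere_subset_closedBall hz))
    have hM0 : 0 ≤ M := le_trans (norm_nonneg _) (hM 0 z0 (mem_closedBall_self hδ.le))
    refine ⟨z0, hsub hz0, δ / 2, by positivity, ?_⟩
    exact aux_ball_conv f z0 δ (δ / 2) M (by positivity) (by linarith)
      (fun n => (hf n).mono (fun z hz => hsub (hδsub hz))) hM0
      (fun n z hz => hM n z (sphere_subset_closedBall hz)) hcoeff
  have hCopen : IsOpen C := by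
    rw [isOpen_iff_mem_nhds]
    rintro a ⟨haD, s, hs, hconvs⟩
    obtain ⟨ε, hε, hεsub⟩ := nhds_basis_ball.mem_iff.1 (hD.mem_nhds haD)
    have hδ : (0:ℝ) < min (s / 2) (ε / 2) := by positivity
    rw [Metric.mem_nhds_iff]
    refine ⟨min (s / 2) (ε / 2), hδ, fun z hz => ?_⟩
    have hzd : dist z a < min (s / 2) (ε / 2) := by rwa [mem_ball] at hz
    refine ⟨hεsub (mem_ball.2 (lt_of_lt_of_le hzd (le_trans (min_le_right _ _) (by linarith)))),
      s / 2, by positivity, hconvs.mono ?_⟩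
    intro x hx
    rw [mem_closedBall] at hx ⊢
    calc dist x a ≤ dist x z + dist z a := dist_triangle _ _ _
      _ ≤ s / 2 + s / 2 := add_le_add hx (le_of_lt (lt_of_lt_of_le hzd (min_le_left _ _)))
      _ = s := by ring
  have hclos : closure C ∩ D ⊆ C := by
    rintro z ⟨hzc, hzD⟩
    obtain ⟨ε, hε, hεsub⟩ := nhds_basis_closedBall.mem_iff.1 (hD.mem_nhds hzD)
    obtain ⟨a, haC, haz⟩ := Metric.mem_closure_iff.1 hzc (ε / 4) (by positivity)
    rw [dist_comm] at haz
    have haD : closedBall a (ε / 2) ⊆ D := by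
      intro x hx
      apply hεsub
      rw [mem_closedBall] at hx ⊢
      calc dist x z ≤ dist x a + dist a z := dist_triangle _ _ _
        _ ≤ ε / 2 + ε / 4 := add_le_add hx haz.le
        _ ≤ ε := by linarith
    have habs := absorb a haC (ε / 2) (by positivity) haD (3 * ε / 8) (by positivity) (by linarith)
    refine ⟨hzD, ε / 8, by positivity, habs.mono ?_⟩
    intro x hx
    rw [mem_closedBall] at hx ⊢
    calc dist x a ≤ dist x z + dist z a := dist_triangle _ _ _
      _ ≤ ε / 8 + ε / 4 := add_le_add hx (by rw [dist_comm]; exact haz.le)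
      _ ≤ 3 * ε / 8 := by linarith
  have hCD : D ⊆ C := by
    apply hDconn.isPreconnected.subset_of_closure_inter_subset hCopen
    · obtain ⟨z, hz⟩ := hCne
      exact ⟨z, hz.1, hz⟩
    · exact hclos
  intro K hKD hK
  have hcover : ∀ z ∈ K, ∃ r > 0, TendstoUniformlyOn f 0 atTop (closedBall z r) := by
    intro z hz
    obtain ⟨-, r, hr, h⟩ := hCD (hKD hz)
    exact ⟨r, hr, h⟩
  choose! rad hrad hradconv using hcover
  have hcov : K ⊆ ⋃ z : K, ball (z : ℂ) (rad z) := fun x hx =>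
    Set.mem_iUnion.2 ⟨⟨x, hx⟩, mem_ball_self (hrad x hx)⟩
  obtain ⟨t, htsub⟩ := hK.elim_finite_subcover (fun z : K => ball (z : ℂ) (rad z))
    (fun z => isOpen_ball) hcov
  rw [Metric.tendstoUniformlyOn_iff]
  intro ε hε
  have hall : ∀ᶠ n in atTop, ∀ z ∈ t, ∀ x ∈ closedBall (z : ℂ) (rad z),
      dist ((0 : ℂ → ℂ) x) (f n x) < ε := by
    rw [Filter.eventually_all_finset]
    intro z _
    exact Metric.tendstoUniformlyOn_iff.1 (hradconv z z.2) ε hε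
  filter_upwards [hall] with n hn x hx
  obtain ⟨z, hzt, hxz⟩ : ∃ z ∈ t, x ∈ ball (z : ℂ) (rad z) := by
    have := htsub hx
    simpa using this
  exact hn z hzt x (ball_subset_closedBall hxz)
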